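/- Let (v^k) and (β^k) be two sequences of nonnegative real numbers, and suppose there exist constants γ > 1 and δ > 0 such that γ v^{k+1} + β^{k+1} ≤ v^k + β^k and δ β^k ≤ v^k for all k ∈ ℕ. Then (v^k) and (β^k) converge to zero with R-linear rate, i.e., there exist constants c > 0 and q ∈ (0,1) such that v^k ≤ c q^k and β^k ≤ c q^k for all k ∈ ℕ. -/

import Mathlib

open Filter

/-- Lemma 2.7 of Malitsky–Tam (2018): R-linear convergence. -/
theorem stmt_14 (v β : ℕ → ℝ) (γ δ : ℝ)
    (hv : ∀ k, 0 ≤ v k) (hβ : ∀ k, 0 ≤ β k)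
    (hγ : 1 < γ) (hδ : 0 < δ)
    (hrec : ∀ k, γ * v (k + 1) + β (k + 1) ≤ v k + β k)
    (hβv : ∀ k, δ * β k ≤ v k) :
    ∃ c > 0, ∃ q, 0 < q ∧ q < 1 ∧ ∀ k, v k ≤ c * q ^ k ∧ β k ≤ c * q ^ k := by
  set a : ℝ := (γ - 1) * δ / (1 + δ) with ha_def
  have ha : 0 < a := by
    apply div_pos (mul_pos (by linarith) hδ) (by linarith)
  set q : ℝ := 1 / (1 + a) with hq_def
  have hq0 : 0 < q := by positivity
  have hq1 : q < 1 := by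
    rw [hq_def, div_lt_one (by linarith)]; linarith
  refine ⟨v 0 + β 0 + 1, by have := hv 0; have := hβ 0; linarith, q, hq0, hq1, ?_⟩
  have key : ∀ k, v k + β k ≤ (v 0 + β 0) * q ^ k := by
    intro k
    induction k with
    | zero => simp
    | succ n ih =>
      have h1 : (1 + a) * (v (n+1) + β (n+1)) ≤ γ * v (n+1) + β (n+1) := by
        have h2 := hβv (n+1)
        have h3 := hv (n+1)
        have h4 := hβ (n+1)
        have h5 : a * (1 + δ) = (γ - 1) * δ := by
          rw [ha_def, div_mul_cancel₀ _ (ne_of_gt (by linarith) : (1 + δ) ≠ 0)]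
        nlinarith [mul_nonneg h4 (le_of_lt ha)]
      have h6 : v (n+1) + β (n+1) ≤ q * (v n + β n) := by
        rw [hq_def]
        rw [div_mul_eq_mul_div, le_div_iff₀ (by linarith)]
        calc (v (n+1) + β (n+1)) * (1 + a) = (1 + a) * (v (n+1) + β (n+1)) := by ring
          _ ≤ γ * v (n+1) + β (n+1) := h1
          _ ≤ v n + β n := hrec n
          _ = 1 * (v n + β n) := by ring
      calc v (n+1) + β (n+1) ≤ q * (v n + β n) := h6
        _ ≤ q * ((v 0 + β 0) * q ^ n) := by
            exact mul_le_mul_of_nonneg_left ih (le_of_lt hq0)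
        _ = (v 0 + β 0) * q ^ (n+1) := by ring
  intro k
  have hk := key k
  have hpow : 0 < q ^ k := pow_pos hq0 k
  have hv' := hv k; have hβ' := hβ k
  constructor <;> nlinarith
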